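/- Let (Ω, ℱ, P) be a probability space, p ≥ 1, W : Ω → (Fin p → ℝ) a random vector, H₀ ⊆ Fin p a set of 'null' indices, and q ∈ (0, 1]. Assume sign-flip symmetry on the nulls: for every ε : Fin p → {−1, +1} with ε_j = +1 for all j ∉ H₀, the random vector (ε_j W_j)_{j} has the same joint distribution as (W_j)_j. Define for each outcome the knockoff+ threshold τ₊ as the smallest element t of the set {|W_j| : j ∈ Fin p, W_j ≠ 0} satisfying (1 + #{j : W_j ≤ −t}) / max(#{j : W_j ≥ t}, 1) ≤ q, declaring no selections if no such t exists; and define the selection set Ŝ = {j : W_j ≥ τ₊} (Ŝ = ∅ when no threshold exists). Then the false discovery rate is controlled: E[ #(Ŝ ∩ H₀) / max(#Ŝ, 1) ] ≤ q. -/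

import Mathlib

open scoped Classical

/-- The candidate knockoff+ thresholds: values `t ∈ {|W_j| : W_j ≠ 0}` such that
`(1 + #{j : W_j ≤ −t}) / max(#{j : W_j ≥ t}, 1) ≤ q`. -/
noncomputable def koCandidates {p : ℕ} (q : ℝ) (w : Fin p → ℝ) : Finset ℝ :=
  ((Finset.univ.filter (fun j : Fin p => w j ≠ 0)).image (fun j => |w j|)).filter
    (fun t =>
      (1 + ((Finset.univ.filter (fun j : Fin p => w j ≤ -t)).card : ℝ)) /
        (max ((Finset.univ.filter (fun j : Fin p => t ≤ w j)).card : ℝ) 1) ≤ q)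

/-- The knockoff+ selection set `Ŝ = {j : W_j ≥ τ₊}`, where `τ₊` is the smallest candidate
threshold; no selections are made if no candidate threshold exists. -/
noncomputable def koSelect {p : ℕ} (q : ℝ) (w : Fin p → ℝ) : Finset (Fin p) :=
  if h : (koCandidates q w).Nonempty then
    Finset.univ.filter (fun j : Fin p => (koCandidates q w).min' h ≤ w j)
  else ∅

/-- The false discovery proportion `#(Ŝ ∩ H₀) / max(#Ŝ, 1)` of the knockoff+ selection. -/
noncomputable def koFDP {p : ℕ} (H0 : Finset (Fin p)) (q : ℝ) (w : Fin p → ℝ) : ℝ :=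
  ((koSelect q w ∩ H0).card : ℝ) / max ((koSelect q w).card : ℝ) 1


open Finset
set_option maxHeartbeats 1600000

/-- number of "positive signs" among the first `k` coordinates -/
noncomputable def koV (n k : ℕ) (s : Finset (Fin n)) : ℕ := #(univ.filter (fun i : Fin n => i.val < k ∧ i ∈ s))

/-- the knockoff supermartingale value -/
noncomputable def koM (n k : ℕ) (s : Finset (Fin n)) : ℝ :=
  (koV n k s : ℝ) / (1 + (k : ℝ) - (koV n k s : ℝ))

lemma ko_card_lt (n a : ℕ) (ha : a ≤ n) :
    #(univ.filter (fun i : Fin n => i.val < a)) = a := by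
  have : univ.filter (fun i : Fin n => i.val < a) = (univ : Finset (Fin a)).image (Fin.castLE ha) := by
    ext j
    simp only [mem_filter, mem_univ, true_and, mem_image]
    constructor
    · intro hj; exact ⟨⟨j.val, hj⟩, by simp [Fin.ext_iff]⟩
    · rintro ⟨i, -, rfl⟩; exact i.isLt
  rw [this, card_image_of_injective _ (Fin.castLE_injective ha), card_univ, Fintype.card_fin]

lemma koV_le (n k : ℕ) (s : Finset (Fin n)) : koV n k s ≤ min k n := by
  have h1 : koV n k s ≤ #(univ.filter (fun i : Fin n => i.val < min k n)) := by
    apply card_le_card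
    intro i hi
    simp only [mem_filter, mem_univ, true_and] at hi ⊢
    exact lt_min hi.1 i.isLt
  rw [ko_card_lt n (min k n) (min_le_right _ _)] at h1
  exact h1

lemma koV_le' (n k : ℕ) (s : Finset (Fin n)) : koV n k s ≤ k :=
  (koV_le n k s).trans (min_le_left _ _)

lemma koM_denom_pos (n k : ℕ) (s : Finset (Fin n)) : (0:ℝ) < 1 + (k : ℝ) - (koV n k s : ℝ) := by
  have := koV_le' n k s
  have : (koV n k s : ℝ) ≤ (k : ℝ) := by exact_mod_cast this
  linarith

lemma koM_nonneg (n k : ℕ) (s : Finset (Fin n)) : 0 ≤ koM n k s :=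
  div_nonneg (Nat.cast_nonneg _) (koM_denom_pos n k s).le

lemma ko_tele (f : ℕ → ℝ) :
    ∀ (n m : ℕ), m ≤ n → f m = f n + ∑ k ∈ Finset.range n, if m ≤ k then f k - f (k+1) else 0 := by
  intro n
  induction n with
  | zero => intro m hm; interval_cases m; simp
  | succ n ih =>
    intro m hm
    rw [Finset.sum_range_succ]
    rcases Nat.lt_or_ge m (n+1) with h | h
    · have hmn : m ≤ n := Nat.lt_succ_iff.mp h
      rw [if_pos hmn]
      have := ih m hmn
      linarith
    · have hm1 : m = n + 1 := le_antisymm hm h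
      subst hm1
      rw [if_neg (by omega)]
      have : (∑ k ∈ Finset.range n, if n + 1 ≤ k then f k - f (k+1) else (0:ℝ)) = (0:ℝ) := by
        apply Finset.sum_eq_zero
        intro k hk
        rw [if_neg]
        simp at hk; omega
      rw [this]; ring

/-- the binomial supermartingale step inequality -/
lemma ko_step (k u : ℕ) (hu : u ≤ k) :
    (Nat.choose k (u+1) : ℝ) * (((u:ℝ)+1)/(1 + (k:ℝ) - ((u:ℝ)+1)))
      + (Nat.choose k u : ℝ) * ((u:ℝ)/(1 + (k:ℝ) - (u:ℝ)))
    ≤ (Nat.choose (k+1) (u+1) : ℝ) * (((u:ℝ)+1)/(1 + ((k:ℝ)+1) - ((u:ℝ)+1))) := by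
  rcases eq_or_lt_of_le hu with rfl | hu'
  · rw [Nat.choose_eq_zero_of_lt (Nat.lt_succ_self u), Nat.choose_self, Nat.choose_self]
    have h1 : 1 + (u:ℝ) - (u:ℝ) = 1 := by ring
    have h2 : 1 + ((u:ℝ)+1) - ((u:ℝ)+1) = 1 := by ring
    rw [h1, h2]
    push_cast
    rw [div_one, div_one]
    nlinarith [Nat.cast_nonneg (α := ℝ) u]
  · -- u < k : equality case
    have hAB : (Nat.choose k (u+1) : ℝ) * ((u:ℝ)+1) = (Nat.choose k u : ℝ) * ((k:ℝ) - (u:ℝ)) := by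
      have := Nat.choose_succ_right_eq k u
      have hc : ((Nat.choose k (u+1) * (u+1) : ℕ) : ℝ) = ((Nat.choose k u * (k - u) : ℕ) : ℝ) := by
        exact_mod_cast congrArg (Nat.cast (R := ℝ)) this
      push_cast [Nat.cast_sub hu'.le] at hc
      push_cast
      linarith
    have hC : (Nat.choose (k+1) (u+1) : ℝ) * ((u:ℝ)+1) = ((k:ℝ)+1) * (Nat.choose k u : ℝ) := by
      have := Nat.add_one_mul_choose_eq k u
      have hc : (((k+1) * Nat.choose k u : ℕ) : ℝ) = ((Nat.choose (k+1) (u+1) * (u+1) : ℕ) : ℝ) := by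
        exact_mod_cast congrArg (Nat.cast (R := ℝ)) this
      push_cast at hc
      linarith
    have hd1 : 1 + (k:ℝ) - ((u:ℝ)+1) = (k:ℝ) - (u:ℝ) := by ring
    have hd1' : (0:ℝ) < (k:ℝ) - (u:ℝ) := by
      have : (u:ℝ) < (k:ℝ) := by exact_mod_cast hu'
      linarith
    have hd2 : (0:ℝ) < 1 + (k:ℝ) - (u:ℝ) := by linarith
    have hd3 : 1 + ((k:ℝ)+1) - ((u:ℝ)+1) = 1 + (k:ℝ) - (u:ℝ) := by ring
    rw [hd1, hd3]
    have e1 : (Nat.choose k (u+1) : ℝ) * (((u:ℝ)+1)/((k:ℝ) - (u:ℝ))) = (Nat.choose k u : ℝ) := by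
      rw [← mul_div_assoc, hAB, mul_div_cancel_right₀ _ (ne_of_gt hd1')]
    rw [e1]
    apply le_of_eq
    rw [← mul_div_assoc, ← mul_div_assoc, hC]
    field_simp
    ring

lemma koV_union_eq (n a : ℕ) (B C : Finset (Fin n)) (hB : ∀ i ∈ B, i.val < a)
    (hC : ∀ i ∈ C, ¬ i.val < a) : koV n a (B ∪ C) = #B := by
  unfold koV
  congr 1
  ext i
  simp only [mem_filter, mem_univ, true_and, mem_union]
  constructor
  · rintro ⟨ha, hi | hi⟩
    · exact hi
    · exact absurd ha (hC i hi)
  · intro hi; exact ⟨hB i hi, Or.inl hi⟩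

lemma koM_union (n a : ℕ) (B C : Finset (Fin n)) (hB : ∀ i ∈ B, i.val < a)
    (hC : ∀ i ∈ C, ¬ i.val < a) :
    koM n a (B ∪ C) = (#B : ℝ) / (1 + (a:ℝ) - (#B : ℝ)) := by
  unfold koM; rw [koV_union_eq n a B C hB hC]

/-- The per-block supermartingale inequality. -/
lemma ko_count (n k : ℕ) (hk : k < n) (v : ℕ) (C : Finset (Fin n)) (hC : ∀ i ∈ C, k+1 ≤ i.val) :
    ∑ B ∈ powersetCard v (univ.filter (fun i : Fin n => i.val < k+1)), koM n k (B ∪ C)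
    ≤ ∑ B ∈ powersetCard v (univ.filter (fun i : Fin n => i.val < k+1)), koM n (k+1) (B ∪ C) := by
  set I : Finset (Fin n) := univ.filter (fun i : Fin n => i.val < k+1) with hI
  set I' : Finset (Fin n) := univ.filter (fun i : Fin n => i.val < k) with hI'
  have hCk : ∀ i ∈ C, ¬ i.val < k := fun i hi => by have := hC i hi; omega
  have hCk1 : ∀ i ∈ C, ¬ i.val < k+1 := fun i hi => by have := hC i hi; omega
  have hIcard : #I = k + 1 := ko_card_lt n (k+1) hk
  have hI'card : #I' = k := ko_card_lt n k hk.le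
  have a0 : (⟨k, hk⟩ : Fin n) ∉ I' := by simp [hI']
  have hins : I = insert ⟨k, hk⟩ I' := by
    ext i
    simp only [hI, hI', mem_filter, mem_univ, true_and, mem_insert, Fin.ext_iff]
    omega
  -- RHS is a sum of constants
  have hRHS : ∀ B ∈ powersetCard v I, koM n (k+1) (B ∪ C) = (v:ℝ)/(1 + ((k:ℝ)+1) - (v:ℝ)) := by
    intro B hB
    rw [mem_powersetCard] at hB
    have hBI : ∀ i ∈ B, i.val < k+1 := fun i hi => by
      have := hB.1 hi; simp [hI, mem_filter] at this; omega
    rw [koM_union n (k+1) B C hBI hCk1, hB.2]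
    push_cast; ring_nf
  rw [Finset.sum_congr rfl hRHS, Finset.sum_const, card_powersetCard, hIcard, nsmul_eq_mul]
  rcases Nat.lt_or_ge (k+1) v with hv | hv
  · -- v > #I : empty
    have he : powersetCard v I = ∅ := Finset.powersetCard_eq_empty.mpr (by omega)
    rw [he, Finset.sum_empty, Nat.choose_eq_zero_of_lt hv]
    simp
  · rcases v with _ | u
    · -- v = 0
      rw [Finset.powersetCard_zero, Finset.sum_singleton]
      rw [Finset.empty_union]
      have h0 : koV n k C = 0 := by
        have := koV_union_eq n k ∅ C (by simp) hCk
        simpa using this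
      unfold koM
      rw [h0]
      norm_num
    · -- v = u+1
      have hu : u ≤ k := by omega
      rw [hins, Finset.powersetCard_succ_insert a0]
      have hdisj : Disjoint (powersetCard (u+1) I') ((powersetCard u I').image (insert ⟨k, hk⟩)) := by
        rw [Finset.disjoint_left]
        intro B hB1 hB2
        rw [mem_powersetCard] at hB1
        rw [Finset.mem_image] at hB2
        obtain ⟨B', hB', rfl⟩ := hB2
        exact a0 (hB1.1 (Finset.mem_insert_self _ _))
      rw [Finset.sum_union hdisj]
      have h1 : ∀ B ∈ powersetCard (u+1) I', koM n k (B ∪ C)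
          = ((u:ℝ)+1)/(1 + (k:ℝ) - ((u:ℝ)+1)) := by
        intro B hB
        rw [mem_powersetCard] at hB
        have hBI : ∀ i ∈ B, i.val < k := fun i hi => by
          have := hB.1 hi; simp [hI', mem_filter] at this; exact this
        rw [koM_union n k B C hBI hCk, hB.2]
        push_cast; ring_nf
      have h2 : ∀ B' ∈ powersetCard u I', koM n k ((insert ⟨k, hk⟩ B') ∪ C)
          = (u:ℝ)/(1 + (k:ℝ) - (u:ℝ)) := by
        intro B' hB'
        rw [mem_powersetCard] at hB'
        have hBI' : ∀ i ∈ B', i.val < k := fun i hi => by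
          have := hB'.1 hi; simp [hI', mem_filter] at this; exact this
        have key : koV n k ((insert ⟨k, hk⟩ B') ∪ C) = #B' := by
          have : (insert ⟨k, hk⟩ B') ∪ C = B' ∪ (insert ⟨k, hk⟩ C) := by
            ext i
            simp only [mem_union, mem_insert]
            tauto
          rw [this]
          apply koV_union_eq n k B' _ hBI'
          intro i hi
          rw [mem_insert] at hi
          rcases hi with rfl | hi
          · simp
          · exact hCk i hi
        unfold koM
        rw [key, hB'.2]
      have himg : ∑ B ∈ (powersetCard u I').image (insert ⟨k, hk⟩), koM n k (B ∪ C)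
          = ∑ B' ∈ powersetCard u I', koM n k ((insert ⟨k, hk⟩ B') ∪ C) := by
        apply Finset.sum_image
        intro B1 h1' B2 h2' heq
        rw [Finset.mem_coe, mem_powersetCard] at h1' h2'
        have e1 : (⟨k, hk⟩ : Fin n) ∉ B1 := fun h => a0 (h1'.1 h)
        have e2 : (⟨k, hk⟩ : Fin n) ∉ B2 := fun h => a0 (h2'.1 h)
        rw [← Finset.erase_insert e1, ← Finset.erase_insert e2, heq]
      rw [himg, Finset.sum_congr rfl h1, Finset.sum_congr rfl h2,
        Finset.sum_const, Finset.sum_const, card_powersetCard, card_powersetCard, hI'card,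
        nsmul_eq_mul, nsmul_eq_mul]
      have := ko_step k u hu
      push_cast
      push_cast at this
      linarith

/-- decomposition of a sum over all subsets into head × tail parts -/
lemma ko_split (n k : ℕ) (F : Finset (Fin n) → ℝ) :
    ∑ s ∈ (univ : Finset (Fin n)).powerset, F s
    = ∑ C ∈ (univ.filter (fun i : Fin n => k ≤ i.val)).powerset,
        ∑ B ∈ (univ.filter (fun i : Fin n => i.val < k)).powerset, F (B ∪ C) := by
  rw [← Finset.sum_product']
  have hrec : ∀ s : Finset (Fin n),
      s.filter (fun i : Fin n => i.val < k) ∪ s.filter (fun i : Fin n => k ≤ i.val) = s := by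
    intro s
    ext i
    simp only [mem_union, mem_filter]
    constructor
    · rintro (h | h) <;> exact h.1
    · intro h
      rcases Nat.lt_or_ge i.val k with h' | h'
      · exact Or.inl ⟨h, h'⟩
      · exact Or.inr ⟨h, h'⟩
  apply Finset.sum_nbij'
    (i := fun s => (s.filter (fun i : Fin n => k ≤ i.val), s.filter (fun i : Fin n => i.val < k)))
    (j := fun pr => pr.2 ∪ pr.1)
  · intro s hs
    rw [Finset.mem_product]
    refine ⟨Finset.mem_powerset.mpr ?_, Finset.mem_powerset.mpr ?_⟩ <;>
      · intro i hi
        rw [mem_filter] at hi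
        rw [mem_filter]
        exact ⟨mem_univ i, hi.2⟩
  · intro pr hpr
    exact Finset.mem_powerset.mpr (Finset.subset_univ _)
  · intro s hs
    exact hrec s
  · intro pr hpr
    rw [Finset.mem_product, Finset.mem_powerset, Finset.mem_powerset] at hpr
    obtain ⟨h1, h2⟩ := hpr
    have e1 : (pr.2 ∪ pr.1).filter (fun i : Fin n => k ≤ i.val) = pr.1 := by
      ext i
      simp only [mem_filter, mem_union]
      constructor
      · intro h
        have hk2 := h.2
        rcases h.1 with hi | hi
        · have := h2 hi; rw [mem_filter] at this; omega
        · exact hi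
      · intro hi
        have := h1 hi; rw [mem_filter] at this
        exact ⟨Or.inr hi, this.2⟩
    have e2 : (pr.2 ∪ pr.1).filter (fun i : Fin n => i.val < k) = pr.2 := by
      ext i
      simp only [mem_filter, mem_union]
      constructor
      · intro h
        have hk2 := h.2
        rcases h.1 with hi | hi
        · exact hi
        · have := h1 hi; rw [mem_filter] at this; omega
      · intro hi
        have := h2 hi; rw [mem_filter] at this
        exact ⟨Or.inl hi, this.2⟩
    exact Prod.ext e1 e2
  · intro s hs
    rw [hrec s]

lemma koM_nonneg' (n k : ℕ) (s : Finset (Fin n)) : 0 ≤ koM n k s := by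
  unfold koM
  have h := koV_le' n k s
  have : (koV n k s : ℝ) ≤ (k : ℝ) := by exact_mod_cast h
  apply div_nonneg (Nat.cast_nonneg _)
  linarith

/-- each "time step" sum is nonpositive -/
lemma ko_step_sum (n k : ℕ) (hk : k < n) (K : Finset (Fin n) → ℕ)
    (hadapt : ∀ s s' : Finset (Fin n), koV n (k+1) s = koV n (k+1) s' →
      s.filter (fun i => k+1 ≤ i.val) = s'.filter (fun i => k+1 ≤ i.val) →
      (k+1 ≤ K s ↔ k+1 ≤ K s')) :
    ∑ s ∈ (univ : Finset (Fin n)).powerset,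
      (if K s ≤ k then koM n k s - koM n (k+1) s else 0) ≤ 0 := by
  rw [ko_split n (k+1)]
  apply Finset.sum_nonpos
  intro C hC
  rw [Finset.mem_powerset] at hC
  have hCk : ∀ i ∈ C, k+1 ≤ i.val := by
    intro i hi
    have := hC hi
    rw [mem_filter] at this
    exact this.2
  rw [Finset.sum_powerset]
  apply Finset.sum_nonpos
  intro v hv
  -- constancy of the stopping indicator on the block
  have hconst : ∀ B B', B ∈ powersetCard v (univ.filter (fun i : Fin n => i.val < k+1)) →
      B' ∈ powersetCard v (univ.filter (fun i : Fin n => i.val < k+1)) →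
      (K (B ∪ C) ≤ k ↔ K (B' ∪ C) ≤ k) := by
    intro B B' hB hB'
    rw [mem_powersetCard] at hB hB'
    have hBI : ∀ i ∈ B, i.val < k+1 := fun i hi => by
      have := hB.1 hi; rw [mem_filter] at this; exact this.2
    have hBI' : ∀ i ∈ B', i.val < k+1 := fun i hi => by
      have := hB'.1 hi; rw [mem_filter] at this; exact this.2
    have hCk1 : ∀ i ∈ C, ¬ i.val < k+1 := fun i hi => by have := hCk i hi; omega
    have hV : koV n (k+1) (B ∪ C) = koV n (k+1) (B' ∪ C) := by
      rw [koV_union_eq n (k+1) B C hBI hCk1, koV_union_eq n (k+1) B' C hBI' hCk1, hB.2, hB'.2]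
    have htail : (B ∪ C).filter (fun i : Fin n => k+1 ≤ i.val)
        = (B' ∪ C).filter (fun i : Fin n => k+1 ≤ i.val) := by
      have e : ∀ (D : Finset (Fin n)), (∀ i ∈ D, i.val < k+1) →
          (D ∪ C).filter (fun i : Fin n => k+1 ≤ i.val) = C := by
        intro D hD
        ext i
        simp only [mem_filter, mem_union]
        constructor
        · intro h
          rcases h.1 with hi | hi
          · have := hD i hi; omega
          · exact hi
        · intro hi
          exact ⟨Or.inr hi, hCk i hi⟩
      rw [e B hBI, e B' hBI']
    have := hadapt (B ∪ C) (B' ∪ C) hV htail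
    omega
  by_cases hstop : ∀ B ∈ powersetCard v (univ.filter (fun i : Fin n => i.val < k+1)), K (B ∪ C) ≤ k
  · have : ∀ B ∈ powersetCard v (univ.filter (fun i : Fin n => i.val < k+1)),
        (if K (B ∪ C) ≤ k then koM n k (B ∪ C) - koM n (k+1) (B ∪ C) else 0)
        = koM n k (B ∪ C) - koM n (k+1) (B ∪ C) := by
      intro B hB; rw [if_pos (hstop B hB)]
    rw [Finset.sum_congr rfl this, Finset.sum_sub_distrib]
    have := ko_count n k hk v C hCk
    linarith
  · push_neg at hstop
    obtain ⟨B₀, hB₀, hKB₀⟩ := hstop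
    have : ∀ B ∈ powersetCard v (univ.filter (fun i : Fin n => i.val < k+1)),
        (if K (B ∪ C) ≤ k then koM n k (B ∪ C) - koM n (k+1) (B ∪ C) else 0) = 0 := by
      intro B hB
      rw [if_neg]
      intro h
      have := (hconst B B₀ hB hB₀).mp h
      omega
    rw [Finset.sum_congr rfl this]
    simp

/-- the final-time expectation bound -/
lemma koM_final (n : ℕ) :
    ∑ s ∈ (univ : Finset (Fin n)).powerset, koM n n s ≤ 2^n := by
  have hval : ∀ s : Finset (Fin n), koV n n s = #s := by
    intro s
    unfold koV
    congr 1
    ext i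
    simp [i.isLt]
  have step : ∀ s ∈ (univ : Finset (Fin n)).powerset,
      koM n n s = (#s : ℝ)/(1 + (n:ℝ) - (#s:ℝ)) := by
    intro s _
    unfold koM
    rw [hval]
  rw [Finset.sum_congr rfl step, Finset.sum_powerset]
  have hcards : ∀ j ∈ Finset.range (#(univ : Finset (Fin n)) + 1),
      ∑ t ∈ powersetCard j (univ : Finset (Fin n)), (#t : ℝ)/(1 + (n:ℝ) - (#t:ℝ))
      = (Nat.choose n j : ℝ) * ((j:ℝ)/(1 + (n:ℝ) - (j:ℝ))) := by
    intro j _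
    have : ∀ t ∈ powersetCard j (univ : Finset (Fin n)),
        (#t : ℝ)/(1 + (n:ℝ) - (#t:ℝ)) = (j:ℝ)/(1 + (n:ℝ) - (j:ℝ)) := by
      intro t ht
      rw [(Finset.mem_powersetCard.mp ht).2]
    rw [Finset.sum_congr rfl this, Finset.sum_const, card_powersetCard, card_univ,
      Fintype.card_fin, nsmul_eq_mul]
  rw [Finset.sum_congr rfl hcards, card_univ, Fintype.card_fin]
  -- now a pure binomial computation
  have key : ∀ j ∈ Finset.range (n+1), (Nat.choose n j : ℝ) * ((j:ℝ)/(1 + (n:ℝ) - (j:ℝ)))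
      ≤ if j = 0 then 0 else (Nat.choose n (j-1) : ℝ) := by
    intro j hj
    rw [Finset.mem_range] at hj
    rcases j with _ | u
    · simp
    · rw [if_neg (Nat.succ_ne_zero u)]
      have hu : u < n := by omega
      have hd : 1 + (n:ℝ) - ((u:ℝ)+1) = (n:ℝ) - (u:ℝ) := by ring
      have hd' : (0:ℝ) < (n:ℝ) - (u:ℝ) := by
        have : (u:ℝ) < (n:ℝ) := by exact_mod_cast hu
        linarith
      have hAB : (Nat.choose n (u+1) : ℝ) * ((u:ℝ)+1) = (Nat.choose n u : ℝ) * ((n:ℝ) - (u:ℝ)) := by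
        have := Nat.choose_succ_right_eq n u
        have hc : ((Nat.choose n (u+1) * (u+1) : ℕ) : ℝ) = ((Nat.choose n u * (n - u) : ℕ) : ℝ) := by
          exact_mod_cast congrArg (Nat.cast (R := ℝ)) this
        push_cast [Nat.cast_sub hu.le] at hc
        push_cast
        linarith
      push_cast
      rw [hd, ← mul_div_assoc]
      rw [hAB, mul_div_cancel_right₀ _ (ne_of_gt hd')]
  calc ∑ j ∈ Finset.range (n+1), (Nat.choose n j : ℝ) * ((j:ℝ)/(1 + (n:ℝ) - (j:ℝ)))
      ≤ ∑ j ∈ Finset.range (n+1), (if j = 0 then 0 else (Nat.choose n (j-1) : ℝ)) :=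
        Finset.sum_le_sum key
    _ = ∑ u ∈ Finset.range n, (Nat.choose n u : ℝ) := by
        rw [Finset.sum_range_succ']
        simp
    _ ≤ ∑ u ∈ Finset.range (n+1), (Nat.choose n u : ℝ) := by
        apply Finset.sum_le_sum_of_subset_of_nonneg (Finset.range_subset_range.mpr (Nat.le_succ n))
        intro i _ _
        positivity
    _ = 2^n := by
        rw [← Nat.cast_sum, Nat.sum_range_choose]
        push_cast
        ring

/-- **Abstract optional stopping bound** for the knockoff supermartingale. -/
lemma koA (n : ℕ) (K : Finset (Fin n) → ℕ) (hK : ∀ s, K s ≤ n)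
    (hadapt : ∀ k, ∀ s s' : Finset (Fin n), koV n k s = koV n k s' →
      s.filter (fun i => k ≤ i.val) = s'.filter (fun i => k ≤ i.val) →
      (k ≤ K s ↔ k ≤ K s')) :
    ∑ s ∈ (univ : Finset (Fin n)).powerset, koM n (K s) s ≤ 2^n := by
  have tele : ∀ s ∈ (univ : Finset (Fin n)).powerset, koM n (K s) s
      = koM n n s + ∑ k ∈ Finset.range n, (if K s ≤ k then koM n k s - koM n (k+1) s else 0) :=
    fun s _ => ko_tele (fun k => koM n k s) n (K s) (hK s)
  rw [Finset.sum_congr rfl tele, Finset.sum_add_distrib]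
  have h2 : ∑ s ∈ (univ : Finset (Fin n)).powerset,
      ∑ k ∈ Finset.range n, (if K s ≤ k then koM n k s - koM n (k+1) s else 0) ≤ 0 := by
    rw [Finset.sum_comm]
    apply Finset.sum_nonpos
    intro k hk
    rw [Finset.mem_range] at hk
    exact ko_step_sum n k hk K (fun s s' => hadapt (k+1) s s')
  have h1 := koM_final n
  linarith

section Bridge

variable {p n : ℕ} (w : Fin p → ℝ) (E : Fin n → Fin p)

/-- flip signs of the coordinates enumerated by `E` according to `s` (`i ∈ s` = positive). -/
noncomputable def koFlip (s : Finset (Fin n)) : Fin p → ℝ :=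
  fun j => if h : ∃ i, E i = j then (if h.choose ∈ s then |w j| else -|w j|) else w j

lemma koFlip_apply (hEinj : Function.Injective E) (s : Finset (Fin n)) (i : Fin n) :
    koFlip w E s (E i) = if i ∈ s then |w (E i)| else -|w (E i)| := by
  unfold koFlip
  have h : ∃ i', E i' = E i := ⟨i, rfl⟩
  rw [dif_pos h]
  have : h.choose = i := hEinj h.choose_spec
  rw [this]

lemma koFlip_apply_not (s : Finset (Fin n)) (j : Fin p) (hj : ¬ ∃ i, E i = j) :
    koFlip w E s j = w j := by
  unfold koFlip
  rw [dif_neg hj]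

lemma koFlip_abs (s : Finset (Fin n)) (j : Fin p) : |koFlip w E s j| = |w j| := by
  unfold koFlip
  split_ifs with h h'
  · exact abs_abs _
  · rw [abs_neg, abs_abs]
  · rfl

lemma koFlip_ne_zero (s : Finset (Fin n)) (j : Fin p) : koFlip w E s j ≠ 0 ↔ w j ≠ 0 := by
  rw [← abs_ne_zero, koFlip_abs, abs_ne_zero]

lemma koFlip_ge_iff (hEinj : Function.Injective E) (s : Finset (Fin n)) (i : Fin n) (t : ℝ) (ht : 0 < t) :
    t ≤ koFlip w E s (E i) ↔ i ∈ s ∧ t ≤ |w (E i)| := by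
  rw [koFlip_apply w E hEinj]
  split_ifs with h
  · simp [h]
  · simp only [h, false_and, iff_false]
    intro hc
    have := abs_nonneg (w (E i))
    linarith

lemma koFlip_le_iff (hEinj : Function.Injective E) (s : Finset (Fin n)) (i : Fin n) (t : ℝ) (ht : 0 < t) :
    koFlip w E s (E i) ≤ -t ↔ i ∉ s ∧ t ≤ |w (E i)| := by
  rw [koFlip_apply w E hEinj]
  split_ifs with h
  · simp only [h, not_true, false_and, iff_false]
    intro hc
    have := abs_nonneg (w (E i))
    linarith
  · simp only [h, not_false_iff, true_and]
    constructor <;> intro <;> linarith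

end Bridge

lemma ko_cands_pos {p : ℕ} {q t : ℝ} {v : Fin p → ℝ} (ht : t ∈ koCandidates q v) : 0 < t := by
  unfold koCandidates at ht
  rw [Finset.mem_filter, Finset.mem_image] at ht
  obtain ⟨⟨j, hj, rfl⟩, -⟩ := ht
  rw [Finset.mem_filter] at hj
  exact abs_pos.mpr hj.2

lemma ko_downset {n : ℕ} (m : Fin n → ℝ) (hm : ∀ i i' : Fin n, i ≤ i' → m i' ≤ m i) (τ : ℝ)
    (i : Fin n) :
    i ∈ univ.filter (fun i' => τ ≤ m i') ↔ i.val < #(univ.filter (fun i' => τ ≤ m i')) := by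
  set S := univ.filter (fun i' : Fin n => τ ≤ m i') with hS
  constructor
  · intro hi
    rw [mem_filter] at hi
    have hsub : Finset.Iic i ⊆ S := by
      intro i' hi'
      rw [Finset.mem_Iic] at hi'
      rw [hS, mem_filter]
      exact ⟨mem_univ _, le_trans hi.2 (hm i' i hi')⟩
    have := Finset.card_le_card hsub
    rw [Fin.card_Iic] at this
    omega
  · intro hcard
    by_contra hi
    have hsub : S ⊆ Finset.Iio i := by
      intro i' hi'
      rw [Finset.mem_Iio]
      by_contra hge
      push_neg at hge
      rw [hS, mem_filter] at hi' hi
      push_neg at hi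
      have := hm i i' hge
      have := hi (mem_univ i)
      have := hi'.2
      linarith
    have := Finset.card_le_card hsub
    rw [Fin.card_Iio] at this
    omega

section Core

variable {p n : ℕ} (H0 : Finset (Fin p)) (q : ℝ) (w : Fin p → ℝ) (E : Fin n → Fin p)

/-- the number of sorted null magnitudes above the knockoff threshold -/
noncomputable def koK (s : Finset (Fin n)) : ℕ :=
  if h : (koCandidates q (koFlip w E s)).Nonempty then
    #(univ.filter (fun i : Fin n => (koCandidates q (koFlip w E s)).min' h ≤ |w (E i)|))
  else 0

lemma koK_le (s : Finset (Fin n)) : koK q w E s ≤ n := by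
  unfold koK
  split_ifs with h
  · exact le_trans (card_le_card (filter_subset _ _)) (by simp)
  · exact Nat.zero_le n

lemma koK_lt_iff (hmono : ∀ i i' : Fin n, i ≤ i' → |w (E i')| ≤ |w (E i)|)
    (s : Finset (Fin n)) (h : (koCandidates q (koFlip w E s)).Nonempty) (i : Fin n) :
    i.val < koK q w E s ↔ (koCandidates q (koFlip w E s)).min' h ≤ |w (E i)| := by
  unfold koK
  rw [dif_pos h]
  rw [← ko_downset (fun i' => |w (E i')|) hmono]
  simp

lemma koK_card_sel
    (hEinj : Function.Injective E)
    (hEH0 : ∀ i, E i ∈ H0)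
    (hEsurj : ∀ j, j ∈ H0 → w j ≠ 0 → ∃ i, E i = j)
    (hmono : ∀ i i' : Fin n, i ≤ i' → |w (E i')| ≤ |w (E i)|)
    (s : Finset (Fin n)) (h : (koCandidates q (koFlip w E s)).Nonempty) :
    #(koSelect q (koFlip w E s) ∩ H0) = koV n (koK q w E s) s := by
  set τ := (koCandidates q (koFlip w E s)).min' h with hτ
  have hτpos : 0 < τ := ko_cands_pos (Finset.min'_mem _ h)
  have hsel : koSelect q (koFlip w E s) = univ.filter (fun j => τ ≤ koFlip w E s j) := by
    unfold koSelect
    rw [dif_pos h]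
  have himg : koSelect q (koFlip w E s) ∩ H0
      = (univ.filter (fun i : Fin n => i.val < koK q w E s ∧ i ∈ s)).image E := by
    rw [hsel]
    ext j
    simp only [Finset.mem_inter, mem_filter, mem_univ, true_and, Finset.mem_image]
    constructor
    · rintro ⟨hle, hj⟩
      have hne : w j ≠ 0 := by
        rw [← koFlip_ne_zero w E s]
        intro h0
        rw [h0] at hle
        linarith
      obtain ⟨i, rfl⟩ := hEsurj j hj hne
      rw [koFlip_ge_iff w E hEinj s i τ hτpos] at hle
      exact ⟨i, ⟨(koK_lt_iff q w E hmono s h i).mpr hle.2, hle.1⟩, rfl⟩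
    · rintro ⟨i, ⟨hik, his⟩, rfl⟩
      refine ⟨?_, hEH0 i⟩
      rw [koFlip_ge_iff w E hEinj s i τ hτpos]
      exact ⟨his, (koK_lt_iff q w E hmono s h i).mp hik⟩
  rw [himg, Finset.card_image_of_injective _ hEinj]
  rfl

lemma koK_split
    (hmono : ∀ i i' : Fin n, i ≤ i' → |w (E i')| ≤ |w (E i)|)
    (s : Finset (Fin n)) (h : (koCandidates q (koFlip w E s)).Nonempty) :
    koK q w E s = koV n (koK q w E s) s
      + #(univ.filter (fun i : Fin n => i.val < koK q w E s ∧ i ∉ s)) := by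
  have h1 : koK q w E s = #(univ.filter (fun i : Fin n => i.val < koK q w E s)) := by
    conv_lhs => rw [koK, dif_pos h]
    congr 1
    ext i
    simp only [mem_filter, mem_univ, true_and]
    rw [← koK_lt_iff q w E hmono s h i]
  have h2 : univ.filter (fun i : Fin n => i.val < koK q w E s)
      = univ.filter (fun i : Fin n => i.val < koK q w E s ∧ i ∈ s)
        ∪ univ.filter (fun i : Fin n => i.val < koK q w E s ∧ i ∉ s) := by
    ext i
    simp only [mem_filter, mem_univ, true_and, Finset.mem_union]
    tauto
  have hdisj : Disjoint (univ.filter (fun i : Fin n => i.val < koK q w E s ∧ i ∈ s))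
      (univ.filter (fun i : Fin n => i.val < koK q w E s ∧ i ∉ s)) := by
    rw [Finset.disjoint_left]
    intro i hi1 hi2
    rw [mem_filter] at hi1 hi2
    exact hi2.2.2 hi1.2.2
  have h3 : #(univ.filter (fun i : Fin n => i.val < koK q w E s))
      = koV n (koK q w E s) s + #(univ.filter (fun i : Fin n => i.val < koK q w E s ∧ i ∉ s)) := by
    rw [h2, Finset.card_union_of_disjoint hdisj]
    rfl
  conv_lhs => rw [h1]
  exact h3

lemma koK_card_neg
    (hEinj : Function.Injective E)
    (hmono : ∀ i i' : Fin n, i ≤ i' → |w (E i')| ≤ |w (E i)|)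
    (s : Finset (Fin n)) (h : (koCandidates q (koFlip w E s)).Nonempty) :
    #(univ.filter (fun i : Fin n => i.val < koK q w E s ∧ i ∉ s))
      ≤ #(univ.filter (fun j : Fin p =>
          koFlip w E s j ≤ -((koCandidates q (koFlip w E s)).min' h))) := by
  set τ := (koCandidates q (koFlip w E s)).min' h with hτ
  have hτpos : 0 < τ := ko_cands_pos (Finset.min'_mem _ h)
  have hsub : (univ.filter (fun i : Fin n => i.val < koK q w E s ∧ i ∉ s)).image E
      ⊆ univ.filter (fun j : Fin p => koFlip w E s j ≤ -τ) := by
    intro j hj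
    rw [Finset.mem_image] at hj
    obtain ⟨i, hi, rfl⟩ := hj
    rw [mem_filter] at hi
    rw [mem_filter]
    refine ⟨mem_univ _, ?_⟩
    rw [koFlip_le_iff w E hEinj s i τ hτpos]
    exact ⟨hi.2.2, (koK_lt_iff q w E hmono s h i).mp hi.2.1⟩
  calc #(univ.filter (fun i : Fin n => i.val < koK q w E s ∧ i ∉ s))
      = #((univ.filter (fun i : Fin n => i.val < koK q w E s ∧ i ∉ s)).image E) :=
        (Finset.card_image_of_injective _ hEinj).symm
    _ ≤ _ := Finset.card_le_card hsub

end Core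

section Core2
variable {p n : ℕ} (H0 : Finset (Fin p)) (q : ℝ) (w : Fin p → ℝ) (E : Fin n → Fin p)

lemma koV_zero (s : Finset (Fin n)) : koV n 0 s = 0 := by
  unfold koV
  simp

lemma koV_le_k (k : ℕ) (s : Finset (Fin n)) : koV n k s ≤ k := by
  unfold koV
  calc #(univ.filter (fun i : Fin n => i.val < k ∧ i ∈ s))
      ≤ #(univ.filter (fun i : Fin n => i.val < k)) := by
        apply card_le_card
        intro i hi
        rw [mem_filter] at hi ⊢
        exact ⟨hi.1, hi.2.1⟩
    _ ≤ k := by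
        apply Finset.card_le_card_of_injOn (fun i => i.val) ?_ ?_ |>.trans
          (le_of_eq (Finset.card_range k))
        · intro i hi
          rw [Finset.mem_coe, mem_filter] at hi
          exact Finset.mem_range.mpr hi.2
        · intro a _ b _ hab
          exact Fin.ext hab

lemma ko_fdp_le_M
    (hq0 : 0 < q)
    (hEinj : Function.Injective E)
    (hEH0 : ∀ i, E i ∈ H0)
    (hEsurj : ∀ j, j ∈ H0 → w j ≠ 0 → ∃ i, E i = j)
    (hmono : ∀ i i' : Fin n, i ≤ i' → |w (E i')| ≤ |w (E i)|)
    (s : Finset (Fin n)) :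
    koFDP H0 q (koFlip w E s) ≤ q * koM n (koK q w E s) s := by
  by_cases h : (koCandidates q (koFlip w E s)).Nonempty
  · set τ := (koCandidates q (koFlip w E s)).min' h with hτ
    set K := koK q w E s with hK
    set V := koV n K s with hV
    set D := #(univ.filter (fun i : Fin n => i.val < K ∧ i ∉ s)) with hD
    set cneg := #(univ.filter (fun j : Fin p => koFlip w E s j ≤ -τ)) with hcneg
    set cpos := #(koSelect q (koFlip w E s)) with hcpos
    have hsel : koSelect q (koFlip w E s)
        = univ.filter (fun j => τ ≤ koFlip w E s j) := by
      unfold koSelect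
      rw [dif_pos h]
    have hratio : (1 + (cneg : ℝ)) / max (cpos : ℝ) 1 ≤ q := by
      have hmem := Finset.min'_mem _ h
      unfold koCandidates at hmem
      rw [Finset.mem_filter] at hmem
      have := hmem.2
      rw [hcpos, hsel]
      exact this
    have hKsplit : K = V + D := koK_split q w E hmono s h
    have hcnegD : D ≤ cneg := koK_card_neg q w E hEinj hmono s h
    have hcard : #(koSelect q (koFlip w E s) ∩ H0) = V :=
      koK_card_sel H0 q w E hEinj hEH0 hEsurj hmono s h
    unfold koFDP
    rw [hcard]
    have hMden : 1 + (K:ℝ) - (V:ℝ) = 1 + (D:ℝ) := by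
      rw [hKsplit]
      push_cast
      ring
    have hM : koM n K s = (V:ℝ)/(1 + (D:ℝ)) := by
      unfold koM
      rw [hMden]
    rw [hM]
    have hmaxpos : (0:ℝ) < max (cpos : ℝ) 1 := lt_of_lt_of_le one_pos (le_max_right _ _)
    have hDpos : (0:ℝ) < 1 + (D:ℝ) := by have := Nat.cast_nonneg (α := ℝ) D; linarith
    have h1 : 1 + (D:ℝ) ≤ 1 + (cneg:ℝ) := by
      have : (D:ℝ) ≤ (cneg:ℝ) := by exact_mod_cast hcnegD
      linarith
    have h2 : 1 + (cneg:ℝ) ≤ q * max (cpos : ℝ) 1 := by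
      rw [div_le_iff₀ hmaxpos] at hratio
      exact hratio
    have hVnn : (0:ℝ) ≤ (V:ℝ) := Nat.cast_nonneg _
    rw [mul_comm q ((V:ℝ) / (1 + (D:ℝ))), div_le_iff₀ hmaxpos, div_mul_eq_mul_div,
      div_mul_eq_mul_div, le_div_iff₀ hDpos]
    nlinarith [mul_le_mul_of_nonneg_left (le_trans h1 h2) hVnn]
  · unfold koFDP koSelect koK
    rw [dif_neg h, dif_neg h]
    have : koM n 0 s = 0 := by
      unfold koM
      rw [koV_zero]
      simp
    rw [this]
    simp

end Core2

section Core3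
variable {p n : ℕ} (q : ℝ) (w : Fin p → ℝ) (E : Fin n → Fin p)

lemma ko_count_pos (hEinj : Function.Injective E) (s : Finset (Fin n)) (t : ℝ) (ht : 0 < t) :
    #(univ.filter (fun j : Fin p => t ≤ koFlip w E s j))
    = #(univ.filter (fun j : Fin p => (¬ ∃ i, E i = j) ∧ t ≤ w j))
      + #(univ.filter (fun i : Fin n => i ∈ s ∧ t ≤ |w (E i)|)) := by
  have hsplit : univ.filter (fun j : Fin p => t ≤ koFlip w E s j)
      = univ.filter (fun j : Fin p => t ≤ koFlip w E s j ∧ ¬ ∃ i, E i = j)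
        ∪ univ.filter (fun j : Fin p => t ≤ koFlip w E s j ∧ ∃ i, E i = j) := by
    ext j
    simp only [mem_filter, mem_univ, true_and, Finset.mem_union]
    tauto
  have hdisj : Disjoint (univ.filter (fun j : Fin p => t ≤ koFlip w E s j ∧ ¬ ∃ i, E i = j))
      (univ.filter (fun j : Fin p => t ≤ koFlip w E s j ∧ ∃ i, E i = j)) := by
    rw [Finset.disjoint_left]
    intro j h1 h2
    rw [mem_filter] at h1 h2
    exact h1.2.2 h2.2.2
  rw [hsplit, Finset.card_union_of_disjoint hdisj]
  congr 1
  · congr 1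
    ext j
    simp only [mem_filter, mem_univ, true_and]
    constructor
    · rintro ⟨h1, h2⟩
      rw [koFlip_apply_not w E s j h2] at h1
      exact ⟨h2, h1⟩
    · rintro ⟨h2, h1⟩
      rw [koFlip_apply_not w E s j h2]
      exact ⟨h1, h2⟩
  · have himg : univ.filter (fun j : Fin p => t ≤ koFlip w E s j ∧ ∃ i, E i = j)
        = (univ.filter (fun i : Fin n => i ∈ s ∧ t ≤ |w (E i)|)).image E := by
      ext j
      simp only [mem_filter, mem_univ, true_and, Finset.mem_image]
      constructor
      · rintro ⟨h1, i, rfl⟩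
        rw [koFlip_ge_iff w E hEinj s i t ht] at h1
        exact ⟨i, h1, rfl⟩
      · rintro ⟨i, hi, rfl⟩
        rw [koFlip_ge_iff w E hEinj s i t ht]
        exact ⟨hi, i, rfl⟩
    rw [himg, Finset.card_image_of_injective _ hEinj]

lemma ko_count_neg (hEinj : Function.Injective E) (s : Finset (Fin n)) (t : ℝ) (ht : 0 < t) :
    #(univ.filter (fun j : Fin p => koFlip w E s j ≤ -t))
    = #(univ.filter (fun j : Fin p => (¬ ∃ i, E i = j) ∧ w j ≤ -t))
      + #(univ.filter (fun i : Fin n => i ∉ s ∧ t ≤ |w (E i)|)) := by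
  have hsplit : univ.filter (fun j : Fin p => koFlip w E s j ≤ -t)
      = univ.filter (fun j : Fin p => koFlip w E s j ≤ -t ∧ ¬ ∃ i, E i = j)
        ∪ univ.filter (fun j : Fin p => koFlip w E s j ≤ -t ∧ ∃ i, E i = j) := by
    ext j
    simp only [mem_filter, mem_univ, true_and, Finset.mem_union]
    tauto
  have hdisj : Disjoint (univ.filter (fun j : Fin p => koFlip w E s j ≤ -t ∧ ¬ ∃ i, E i = j))
      (univ.filter (fun j : Fin p => koFlip w E s j ≤ -t ∧ ∃ i, E i = j)) := by
    rw [Finset.disjoint_left]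
    intro j h1 h2
    rw [mem_filter] at h1 h2
    exact h1.2.2 h2.2.2
  rw [hsplit, Finset.card_union_of_disjoint hdisj]
  congr 1
  · congr 1
    ext j
    simp only [mem_filter, mem_univ, true_and]
    constructor
    · rintro ⟨h1, h2⟩
      rw [koFlip_apply_not w E s j h2] at h1
      exact ⟨h2, h1⟩
    · rintro ⟨h2, h1⟩
      rw [koFlip_apply_not w E s j h2]
      exact ⟨h1, h2⟩
  · have himg : univ.filter (fun j : Fin p => koFlip w E s j ≤ -t ∧ ∃ i, E i = j)
        = (univ.filter (fun i : Fin n => i ∉ s ∧ t ≤ |w (E i)|)).image E := by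
      ext j
      simp only [mem_filter, mem_univ, true_and, Finset.mem_image]
      constructor
      · rintro ⟨h1, i, rfl⟩
        rw [koFlip_le_iff w E hEinj s i t ht] at h1
        exact ⟨i, h1, rfl⟩
      · rintro ⟨i, hi, rfl⟩
        rw [koFlip_le_iff w E hEinj s i t ht]
        exact ⟨hi, i, rfl⟩
    rw [himg, Finset.card_image_of_injective _ hEinj]

lemma ko_inner_pos (hmono : ∀ i i' : Fin n, i ≤ i' → |w (E i')| ≤ |w (E i)|)
    (k' : ℕ) (hk' : k' < n) (s s' : Finset (Fin n))
    (hV : koV n (k'+1) s = koV n (k'+1) s')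
    (hmem : ∀ i : Fin n, k'+1 ≤ i.val → (i ∈ s ↔ i ∈ s'))
    (t : ℝ) (hta : t ≤ |w (E ⟨k', hk'⟩)|) :
    #(univ.filter (fun i : Fin n => i ∈ s ∧ t ≤ |w (E i)|))
    = #(univ.filter (fun i : Fin n => i ∈ s' ∧ t ≤ |w (E i)|)) := by
  have hauto : ∀ (i : Fin n), i.val < k'+1 → t ≤ |w (E i)| := by
    intro i hi
    refine le_trans hta (hmono i ⟨k', hk'⟩ ?_)
    rw [Fin.le_def]
    simp only [Fin.val_mk]
    omega
  have key : ∀ (u : Finset (Fin n)), (∀ i : Fin n, k'+1 ≤ i.val → (i ∈ u ↔ i ∈ s')) →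
      univ.filter (fun i : Fin n => i ∈ u ∧ t ≤ |w (E i)|)
      = univ.filter (fun i : Fin n => i.val < k'+1 ∧ i ∈ u)
        ∪ univ.filter (fun i : Fin n => k'+1 ≤ i.val ∧ i ∈ s' ∧ t ≤ |w (E i)|) := by
    intro u hu
    ext i
    simp only [mem_filter, mem_univ, true_and, Finset.mem_union]
    constructor
    · rintro ⟨h1, h2⟩
      rcases Nat.lt_or_ge i.val (k'+1) with hlt | hge
      · exact Or.inl ⟨hlt, h1⟩
      · exact Or.inr ⟨hge, (hu i hge).mp h1, h2⟩
    · rintro (⟨h1, h2⟩ | ⟨h1, h2, h3⟩)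
      · exact ⟨h2, hauto i h1⟩
      · exact ⟨(hu i h1).mpr h2, h3⟩
  have hdisj : ∀ (u : Finset (Fin n)), Disjoint
      (univ.filter (fun i : Fin n => i.val < k'+1 ∧ i ∈ u))
      (univ.filter (fun i : Fin n => k'+1 ≤ i.val ∧ i ∈ s' ∧ t ≤ |w (E i)|)) := by
    intro u
    rw [Finset.disjoint_left]
    intro i h1 h2
    rw [mem_filter] at h1 h2
    omega
  rw [key s hmem, key s' (fun i _ => Iff.rfl), Finset.card_union_of_disjoint (hdisj s),
    Finset.card_union_of_disjoint (hdisj s')]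
  have : #(univ.filter (fun i : Fin n => i.val < k'+1 ∧ i ∈ s))
      = #(univ.filter (fun i : Fin n => i.val < k'+1 ∧ i ∈ s')) := hV
  omega

lemma ko_inner_neg (hmono : ∀ i i' : Fin n, i ≤ i' → |w (E i')| ≤ |w (E i)|)
    (k' : ℕ) (hk' : k' < n) (s s' : Finset (Fin n))
    (hV : koV n (k'+1) s = koV n (k'+1) s')
    (hmem : ∀ i : Fin n, k'+1 ≤ i.val → (i ∈ s ↔ i ∈ s'))
    (t : ℝ) (hta : t ≤ |w (E ⟨k', hk'⟩)|) :
    #(univ.filter (fun i : Fin n => i ∉ s ∧ t ≤ |w (E i)|))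
    = #(univ.filter (fun i : Fin n => i ∉ s' ∧ t ≤ |w (E i)|)) := by
  have hauto : ∀ (i : Fin n), i.val < k'+1 → t ≤ |w (E i)| := by
    intro i hi
    refine le_trans hta (hmono i ⟨k', hk'⟩ ?_)
    rw [Fin.le_def]
    simp only [Fin.val_mk]
    omega
  have key : ∀ (u : Finset (Fin n)), (∀ i : Fin n, k'+1 ≤ i.val → (i ∈ u ↔ i ∈ s')) →
      univ.filter (fun i : Fin n => i ∉ u ∧ t ≤ |w (E i)|)
      = univ.filter (fun i : Fin n => i.val < k'+1 ∧ i ∉ u)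
        ∪ univ.filter (fun i : Fin n => k'+1 ≤ i.val ∧ i ∉ s' ∧ t ≤ |w (E i)|) := by
    intro u hu
    ext i
    simp only [mem_filter, mem_univ, true_and, Finset.mem_union]
    constructor
    · rintro ⟨h1, h2⟩
      rcases Nat.lt_or_ge i.val (k'+1) with hlt | hge
      · exact Or.inl ⟨hlt, h1⟩
      · exact Or.inr ⟨hge, fun hc => h1 ((hu i hge).mpr hc), h2⟩
    · rintro (⟨h1, h2⟩ | ⟨h1, h2, h3⟩)
      · exact ⟨h2, hauto i h1⟩
      · exact ⟨fun hc => h2 ((hu i h1).mp hc), h3⟩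
  have hdisj : ∀ (u : Finset (Fin n)), Disjoint
      (univ.filter (fun i : Fin n => i.val < k'+1 ∧ i ∉ u))
      (univ.filter (fun i : Fin n => k'+1 ≤ i.val ∧ i ∉ s' ∧ t ≤ |w (E i)|)) := by
    intro u
    rw [Finset.disjoint_left]
    intro i h1 h2
    rw [mem_filter] at h1 h2
    omega
  -- relate #(i.val < k'+1 ∧ i ∉ u) to koV
  have hcompl : ∀ (u : Finset (Fin n)),
      #(univ.filter (fun i : Fin n => i.val < k'+1 ∧ i ∈ u))
        + #(univ.filter (fun i : Fin n => i.val < k'+1 ∧ i ∉ u))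
      = #(univ.filter (fun i : Fin n => i.val < k'+1)) := by
    intro u
    rw [← Finset.card_union_of_disjoint]
    · congr 1
      ext i
      simp only [mem_filter, mem_univ, true_and, Finset.mem_union]
      tauto
    · rw [Finset.disjoint_left]
      intro i h1 h2
      rw [mem_filter] at h1 h2
      exact h2.2.2 h1.2.2
  rw [key s hmem, key s' (fun i _ => Iff.rfl), Finset.card_union_of_disjoint (hdisj s),
    Finset.card_union_of_disjoint (hdisj s')]
  have h1 := hcompl s
  have h2 := hcompl s'
  have h3 : #(univ.filter (fun i : Fin n => i.val < k'+1 ∧ i ∈ s))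
      = #(univ.filter (fun i : Fin n => i.val < k'+1 ∧ i ∈ s')) := hV
  omega

end Core3

section Core4
variable {p n : ℕ} (q : ℝ) (w : Fin p → ℝ) (E : Fin n → Fin p)

lemma ko_cands_transfer
    (hEinj : Function.Injective E)
    (hmono : ∀ i i' : Fin n, i ≤ i' → |w (E i')| ≤ |w (E i)|)
    (k' : ℕ) (hk' : k' < n) (s s' : Finset (Fin n))
    (hV : koV n (k'+1) s = koV n (k'+1) s')
    (hmem : ∀ i : Fin n, k'+1 ≤ i.val → (i ∈ s ↔ i ∈ s'))
    (t : ℝ) (hta : t ≤ |w (E ⟨k', hk'⟩)|)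
    (htc : t ∈ koCandidates q (koFlip w E s)) :
    t ∈ koCandidates q (koFlip w E s') := by
  have ht : 0 < t := ko_cands_pos htc
  have hcpos : #(univ.filter (fun j : Fin p => t ≤ koFlip w E s j))
      = #(univ.filter (fun j : Fin p => t ≤ koFlip w E s' j)) := by
    rw [ko_count_pos w E hEinj s t ht, ko_count_pos w E hEinj s' t ht,
      ko_inner_pos w E hmono k' hk' s s' hV hmem t hta]
  have hcneg : #(univ.filter (fun j : Fin p => koFlip w E s j ≤ -t))
      = #(univ.filter (fun j : Fin p => koFlip w E s' j ≤ -t)) := by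
    rw [ko_count_neg w E hEinj s t ht, ko_count_neg w E hEinj s' t ht,
      ko_inner_neg w E hmono k' hk' s s' hV hmem t hta]
  unfold koCandidates at htc ⊢
  rw [Finset.mem_filter] at htc ⊢
  obtain ⟨himg, hratio⟩ := htc
  constructor
  · rw [Finset.mem_image] at himg ⊢
    obtain ⟨j, hj, habs⟩ := himg
    rw [Finset.mem_filter] at hj
    refine ⟨j, ?_, ?_⟩
    · rw [Finset.mem_filter]
      refine ⟨mem_univ _, ?_⟩
      rw [koFlip_ne_zero]
      rw [koFlip_ne_zero] at hj
      exact hj.2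
    · rw [koFlip_abs]
      rw [koFlip_abs] at habs
      exact habs
  · rw [← hcpos, ← hcneg]
    exact hratio

lemma ko_adapt
    (hEinj : Function.Injective E)
    (hmono : ∀ i i' : Fin n, i ≤ i' → |w (E i')| ≤ |w (E i)|)
    (k : ℕ) (s s' : Finset (Fin n))
    (hV : koV n k s = koV n k s')
    (htail : s.filter (fun i => k ≤ i.val) = s'.filter (fun i => k ≤ i.val)) :
    (k ≤ koK q w E s ↔ k ≤ koK q w E s') := by
  have hmem : ∀ i : Fin n, k ≤ i.val → (i ∈ s ↔ i ∈ s') := by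
    intro i hi
    constructor
    · intro h
      have : i ∈ s.filter (fun i => k ≤ i.val) := by rw [mem_filter]; exact ⟨h, hi⟩
      rw [htail, mem_filter] at this
      exact this.1
    · intro h
      have : i ∈ s'.filter (fun i => k ≤ i.val) := by rw [mem_filter]; exact ⟨h, hi⟩
      rw [← htail, mem_filter] at this
      exact this.1
  -- one-directional claim
  have main : ∀ u u' : Finset (Fin n), koV n k u = koV n k u' →
      (∀ i : Fin n, k ≤ i.val → (i ∈ u ↔ i ∈ u')) → k ≤ koK q w E u → k ≤ koK q w E u' := by
    intro u u' hVu hmemu hku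
    rcases Nat.eq_zero_or_pos k with rfl | hkpos
    · exact Nat.zero_le _
    obtain ⟨k', rfl⟩ : ∃ k'', k = k'' + 1 := ⟨k - 1, by omega⟩
    have hkn : k' + 1 ≤ n := le_trans hku (koK_le q w E u)
    have hk' : k' < n := hkn
    set a : Fin n := ⟨k', hk'⟩ with ha
    -- candidates of u are nonempty
    have hne : (koCandidates q (koFlip w E u)).Nonempty := by
      by_contra hc
      have : koK q w E u = 0 := by unfold koK; rw [dif_neg hc]
      omega
    set τ := (koCandidates q (koFlip w E u)).min' hne with hτ
    have hτa : τ ≤ |w (E a)| := by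
      have := (koK_lt_iff q w E hmono u hne a).mp (by simp [ha]; omega)
      exact this
    have hτmem : τ ∈ koCandidates q (koFlip w E u') :=
      ko_cands_transfer q w E hEinj hmono k' hk' u u' hVu hmemu τ hτa
        (Finset.min'_mem _ hne)
    have hne' : (koCandidates q (koFlip w E u')).Nonempty := ⟨τ, hτmem⟩
    have hτ'le : (koCandidates q (koFlip w E u')).min' hne' ≤ |w (E a)| :=
      le_trans (Finset.min'_le _ τ hτmem) hτa
    have := (koK_lt_iff q w E hmono u' hne' a).mpr hτ'le
    simp only [ha] at this
    omega
  exact ⟨main s s' hV hmem, main s' s hV.symm (fun i hi => (hmem i hi).symm)⟩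

end Core4

section Core5
variable {p n : ℕ} (H0 : Finset (Fin p)) (q : ℝ) (w : Fin p → ℝ) (E : Fin n → Fin p)

lemma ko_core (hq0 : 0 < q)
    (hEinj : Function.Injective E)
    (hEH0 : ∀ i, E i ∈ H0)
    (hEsurj : ∀ j, j ∈ H0 → w j ≠ 0 → ∃ i, E i = j)
    (hmono : ∀ i i' : Fin n, i ≤ i' → |w (E i')| ≤ |w (E i)|) :
    ∑ s ∈ (univ : Finset (Fin n)).powerset, koFDP H0 q (koFlip w E s) ≤ 2^n * q := by
  calc ∑ s ∈ (univ : Finset (Fin n)).powerset, koFDP H0 q (koFlip w E s)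
      ≤ ∑ s ∈ (univ : Finset (Fin n)).powerset, q * koM n (koK q w E s) s :=
        Finset.sum_le_sum (fun s _ => ko_fdp_le_M H0 q w E hq0 hEinj hEH0 hEsurj hmono s)
    _ = q * ∑ s ∈ (univ : Finset (Fin n)).powerset, koM n (koK q w E s) s := by
        rw [Finset.mul_sum]
    _ ≤ q * 2^n := by
        apply mul_le_mul_of_nonneg_left _ hq0.le
        exact koA n (koK q w E) (koK_le q w E)
          (fun k s s' hV htail => ko_adapt q w E hEinj hmono k s s' hV htail)
    _ = 2^n * q := mul_comm _ _

end Core5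

lemma ko_powerset_split {α : Type*} [DecidableEq α] (X Y : Finset α) (hd : Disjoint X Y)
    (F : Finset α → ℝ) :
    ∑ A ∈ (X ∪ Y).powerset, F A = ∑ B ∈ X.powerset, ∑ C ∈ Y.powerset, F (B ∪ C) := by
  rw [← Finset.sum_product']
  apply Finset.sum_nbij' (i := fun A => (A ∩ X, A ∩ Y)) (j := fun pr => pr.1 ∪ pr.2)
  · intro A hA
    rw [Finset.mem_product, Finset.mem_powerset, Finset.mem_powerset]
    exact ⟨Finset.inter_subset_right, Finset.inter_subset_right⟩
  · intro pr hpr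
    rw [Finset.mem_product, Finset.mem_powerset, Finset.mem_powerset] at hpr
    rw [Finset.mem_powerset]
    exact Finset.union_subset (hpr.1.trans Finset.subset_union_left)
      (hpr.2.trans Finset.subset_union_right)
  · intro A hA
    rw [Finset.mem_powerset] at hA
    simp only []
    rw [← Finset.inter_union_distrib_left]
    exact Finset.inter_eq_left.mpr hA
  · intro pr hpr
    rw [Finset.mem_product, Finset.mem_powerset, Finset.mem_powerset] at hpr
    obtain ⟨h1, h2⟩ := hpr
    have e1 : (pr.1 ∪ pr.2) ∩ X = pr.1 := by
      ext a
      simp only [Finset.mem_inter, Finset.mem_union]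
      constructor
      · rintro ⟨ha | ha, hX⟩
        · exact ha
        · exact absurd hX (Finset.disjoint_right.mp hd (h2 ha))
      · intro ha
        exact ⟨Or.inl ha, h1 ha⟩
    have e2 : (pr.1 ∪ pr.2) ∩ Y = pr.2 := by
      ext a
      simp only [Finset.mem_inter, Finset.mem_union]
      constructor
      · rintro ⟨ha | ha, hY⟩
        · exact absurd hY (Finset.disjoint_left.mp hd (h1 ha))
        · exact ha
      · intro ha
        exact ⟨Or.inr ha, h2 ha⟩
    exact Prod.ext e1 e2
  · intro A hA
    rw [Finset.mem_powerset] at hA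
    have hAe : A ∩ X ∪ A ∩ Y = A := by
      rw [← Finset.inter_union_distrib_left]
      exact Finset.inter_eq_left.mpr hA
    show F A = F (A ∩ X ∪ A ∩ Y)
    rw [hAe]

lemma ko_det {p : ℕ} (H0 : Finset (Fin p)) (q : ℝ) (hq0 : 0 < q) (w : Fin p → ℝ) :
    ∑ A ∈ H0.powerset, koFDP H0 q (fun j => (if j ∈ A then (-1:ℝ) else 1) * w j)
      ≤ 2^(#H0) * q := by
  classical
  set N := H0.filter (fun j => w j ≠ 0) with hN
  set n := #N with hn
  let e : Fin n ≃ {x // x ∈ N} := N.equivFin.symm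
  let f : Fin n → ℝ := fun i => -|w ((e i : Fin p))|
  let π : Equiv.Perm (Fin n) := Tuple.sort f
  let E : Fin n → Fin p := fun i => ((e (π i) : {x // x ∈ N}) : Fin p)
  have hEN : ∀ i, E i ∈ N := fun i => (e (π i)).2
  have hEinj : Function.Injective E := by
    intro i i' h
    exact π.injective (e.injective (Subtype.coe_injective h))
  have hEH0 : ∀ i, E i ∈ H0 := fun i => (Finset.mem_filter.mp (hEN i)).1
  have hEne : ∀ i, w (E i) ≠ 0 := fun i => (Finset.mem_filter.mp (hEN i)).2
  have hEsurj : ∀ j, j ∈ H0 → w j ≠ 0 → ∃ i, E i = j := by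
    intro j hj hw
    refine ⟨π.symm (e.symm ⟨j, Finset.mem_filter.mpr ⟨hj, hw⟩⟩), ?_⟩
    show ((e (π (π.symm (e.symm ⟨j, _⟩))) : {x // x ∈ N}) : Fin p) = j
    rw [Equiv.apply_symm_apply, Equiv.apply_symm_apply]
  have hmono : ∀ i i' : Fin n, i ≤ i' → |w (E i')| ≤ |w (E i)| := by
    intro i i' hii
    have := Tuple.monotone_sort f hii
    simp only [Function.comp] at this
    -- this : f (π i) ≤ f (π i')
    have h2 : -|w (E i)| ≤ -|w (E i')| := this
    linarith
  let F : Finset (Fin p) → ℝ :=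
    fun A => koFDP H0 q (fun j => (if j ∈ A then (-1:ℝ) else 1) * w j)
  show ∑ A ∈ H0.powerset, F A ≤ 2^(#H0) * q
  have hsplit : H0 = N ∪ (H0 \ N) := (Finset.union_sdiff_of_subset (Finset.filter_subset _ _)).symm
  have hdisj : Disjoint N (H0 \ N) := Finset.disjoint_sdiff
  have hFBC : ∀ B ∈ N.powerset, ∀ C ∈ (H0 \ N).powerset, F (B ∪ C) = F B := by
    intro B hB C hC
    rw [Finset.mem_powerset] at hB hC
    show koFDP H0 q _ = koFDP H0 q _
    congr 1
    funext j
    by_cases hjB : j ∈ B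
    · rw [if_pos (Finset.mem_union_left _ hjB), if_pos hjB]
    · by_cases hjC : j ∈ C
      · have hjN : j ∉ N := (Finset.mem_sdiff.mp (hC hjC)).2
        have hjH : j ∈ H0 := (Finset.mem_sdiff.mp (hC hjC)).1
        have hw0 : w j = 0 := by
          by_contra hc
          exact hjN (Finset.mem_filter.mpr ⟨hjH, hc⟩)
        rw [hw0, mul_zero, mul_zero]
      · rw [if_neg (fun hc => (Finset.mem_union.mp hc).elim hjB hjC), if_neg hjB]
  -- the map from subsets of N to sign patterns
  have hkey : ∀ B : Finset (Fin p), B ⊆ N →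
      koFlip w E (univ.filter (fun i : Fin n => 0 < (if E i ∈ B then -(w (E i)) else w (E i))))
      = fun j => (if j ∈ B then (-1:ℝ) else 1) * w j := by
    intro B hB
    funext j
    by_cases hj : ∃ i, E i = j
    · obtain ⟨i, rfl⟩ := hj
      rw [koFlip_apply w E hEinj]
      have hval : (if E i ∈ B then (-1:ℝ) else 1) * w (E i)
          = (if E i ∈ B then -(w (E i)) else w (E i)) := by
        split_ifs <;> ring
      rw [hval]
      set x := if E i ∈ B then -(w (E i)) else w (E i) with hx
      have hxabs : |x| = |w (E i)| := by
        rw [hx]; split_ifs <;> simp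
      have hxne : x ≠ 0 := by
        rw [hx]; split_ifs <;> simpa using hEne i
      have hcond : (i ∈ univ.filter (fun i' : Fin n =>
          0 < (if E i' ∈ B then -(w (E i')) else w (E i')))) ↔ 0 < x := by
        rw [Finset.mem_filter, hx]
        simp
      by_cases hpos : 0 < x
      · rw [if_pos (hcond.mpr hpos), ← hxabs, abs_of_pos hpos]
      · have hneg : x < 0 := lt_of_le_of_ne (not_lt.mp hpos) hxne
        rw [if_neg (fun hc => hpos (hcond.mp hc)), ← hxabs, abs_of_neg hneg]
        ring
    · rw [koFlip_apply_not w E _ j hj]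
      have hjB : j ∉ B := by
        intro hc
        have hjN := hB hc
        rw [Finset.mem_filter] at hjN
        exact hj (hEsurj j hjN.1 hjN.2)
      rw [if_neg hjB, one_mul]
  have hbij : ∑ B ∈ N.powerset, F B
      = ∑ s ∈ (univ : Finset (Fin n)).powerset, koFDP H0 q (koFlip w E s) := by
    apply Finset.sum_nbij'
      (i := fun B => univ.filter (fun i : Fin n => 0 < (if E i ∈ B then -(w (E i)) else w (E i))))
      (j := fun s => N.filter (fun j => koFlip w E s j ≠ w j))
    · intro B hB
      exact Finset.mem_powerset.mpr (Finset.subset_univ _)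
    · intro s hs
      exact Finset.mem_powerset.mpr (Finset.filter_subset _ _)
    · -- left inverse
      intro B hB
      rw [Finset.mem_powerset] at hB
      rw [hkey B hB]
      ext j
      rw [Finset.mem_filter]
      constructor
      · rintro ⟨hjN, hcond⟩
        by_contra hjB
        simp only [if_neg hjB, one_mul] at hcond
        exact hcond rfl
      · intro hjB
        have hjN := hB hjB
        refine ⟨hjN, ?_⟩
        simp only [if_pos hjB]
        rw [Finset.mem_filter] at hjN
        intro hc
        apply hjN.2
        nlinarith [hc]
    · -- right inverse
      intro s hs
      ext i
      rw [Finset.mem_filter]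
      have hENi := hEN i
      have hcond : (E i ∈ N.filter (fun j => koFlip w E s j ≠ w j))
          ↔ koFlip w E s (E i) ≠ w (E i) := by
        rw [Finset.mem_filter]
        exact ⟨fun h => h.2, fun h => ⟨hENi, h⟩⟩
      rw [koFlip_apply w E hEinj] at hcond
      rcases (hEne i).lt_or_gt with hneg | hpos
      · by_cases his : i ∈ s
        · -- w < 0, i ∈ s: flip = |w| = -w ≠ w, so flagged; value -(w) > 0
          have : koFlip w E s (E i) = |w (E i)| := by rw [koFlip_apply w E hEinj, if_pos his]
          have hflag : E i ∈ N.filter (fun j => koFlip w E s j ≠ w j) := by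
            rw [hcond, if_pos his]
            rw [abs_of_neg hneg]
            intro hc
            nlinarith
          simp only [mem_univ, true_and, hflag, if_pos]
          constructor
          · intro _; exact his
          · intro _; linarith
        · -- w < 0, i ∉ s: flip = -|w| = w, not flagged; value w < 0
          have hflag : E i ∉ N.filter (fun j => koFlip w E s j ≠ w j) := by
            rw [hcond, if_neg his, abs_of_neg hneg]
            simp
          simp only [mem_univ, true_and, hflag, if_neg, not_false_iff]
          constructor
          · intro hc; linarith
          · intro hc; exact absurd hc his
      · by_cases his : i ∈ s
        · -- w > 0, i ∈ s: flip = |w| = w, not flagged; value w > 0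
          have hflag : E i ∉ N.filter (fun j => koFlip w E s j ≠ w j) := by
            rw [hcond, if_pos his, abs_of_pos hpos]
            simp
          simp only [mem_univ, true_and, hflag, if_neg, not_false_iff]
          constructor
          · intro _; exact his
          · intro _; exact hpos
        · -- w > 0, i ∉ s: flip = -|w| = -w ≠ w, flagged; value -w < 0
          have hflag : E i ∈ N.filter (fun j => koFlip w E s j ≠ w j) := by
            rw [hcond, if_neg his, abs_of_pos hpos]
            intro hc
            nlinarith
          simp only [mem_univ, true_and, hflag, if_pos]
          constructor
          · intro hc; linarith
          · intro hc; exact absurd hc his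
    · -- value
      intro B hB
      rw [Finset.mem_powerset] at hB
      show koFDP H0 q _ = koFDP H0 q _
      rw [hkey B hB]
  calc ∑ A ∈ H0.powerset, F A
      = ∑ A ∈ (N ∪ (H0 \ N)).powerset, F A := by rw [← hsplit]
    _ = ∑ B ∈ N.powerset, ∑ C ∈ (H0 \ N).powerset, F (B ∪ C) :=
        ko_powerset_split N (H0 \ N) hdisj F
    _ = ∑ B ∈ N.powerset, (2^(#(H0 \ N)) : ℝ) * F B := by
        apply Finset.sum_congr rfl
        intro B hB
        rw [Finset.sum_congr rfl (fun C hC => hFBC B hB C hC), Finset.sum_const,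
          Finset.card_powerset, nsmul_eq_mul]
        push_cast
        ring
    _ = (2^(#(H0 \ N)) : ℝ) * ∑ B ∈ N.powerset, F B := by rw [Finset.mul_sum]
    _ = (2^(#(H0 \ N)) : ℝ) * ∑ s ∈ (univ : Finset (Fin n)).powerset,
          koFDP H0 q (koFlip w E s) := by rw [hbij]
    _ ≤ (2^(#(H0 \ N)) : ℝ) * (2^n * q) := by
        apply mul_le_mul_of_nonneg_left _ (by positivity)
        exact ko_core H0 q w E hq0 hEinj hEH0 hEsurj hmono
    _ = 2^(#H0) * q := by
        have hcard : #(H0 \ N) + n = #H0 := by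
          rw [hn]
          exact Finset.card_sdiff_add_card_eq_card (Finset.filter_subset _ _)
        rw [← hcard]
        rw [pow_add]
        push_cast
        ring

section Meas
variable {p : ℕ}

/-- index-level candidate set -/
noncomputable def koCandIdx (q : ℝ) (w : Fin p → ℝ) : Finset (Fin p) :=
  univ.filter (fun j => w j ≠ 0 ∧
    (1 + (#(univ.filter (fun i : Fin p => w i ≤ -|w j|)) : ℝ)) /
      (max (#(univ.filter (fun i : Fin p => |w j| ≤ w i)) : ℝ) 1) ≤ q)

lemma koCand_eq (q : ℝ) (w : Fin p → ℝ) :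
    koCandidates q w = (koCandIdx q w).image (fun j => |w j|) := by
  unfold koCandidates koCandIdx
  rw [Finset.filter_image, Finset.filter_filter]

lemma koCand_nonempty_iff (q : ℝ) (w : Fin p → ℝ) :
    (koCandidates q w).Nonempty ↔ (koCandIdx q w).Nonempty := by
  rw [koCand_eq, Finset.image_nonempty]

lemma koCand_min' (q : ℝ) (w : Fin p → ℝ) (h : (koCandidates q w).Nonempty)
    (h' : (koCandIdx q w).Nonempty) :
    (koCandidates q w).min' h = (koCandIdx q w).inf' h' (fun j => |w j|) := by
  have := koCand_eq q w
  rw [Finset.min'_eq_inf']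
  have h2 : (koCandidates q w).inf' h id
      = ((koCandIdx q w).image (fun j => |w j|)).inf' (by rw [← this]; exact h) id := by
    congr 1
  rw [h2, Finset.inf'_image]
  rfl

lemma ko_meas_count (P : Fin p → (Fin p → ℝ) → Prop)
    (D : (w : Fin p → ℝ) → (i : Fin p) → Decidable (P i w))
    (hP : ∀ i, MeasurableSet {w : Fin p → ℝ | P i w}) :
    Measurable (fun w : Fin p → ℝ => (#(@Finset.filter _ (fun i => P i w) (D w) univ) : ℝ)) := by
  have heq : (fun w : Fin p → ℝ => (#(@Finset.filter _ (fun i => P i w) (D w) univ) : ℝ))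
      = fun w => ∑ i : Fin p, @ite _ (P i w) (D w i) (1:ℝ) 0 := by
    funext w
    rw [Finset.card_filter]
    push_cast
    rfl
  rw [heq]
  apply Finset.measurable_sum
  intro i _
  have h2 : (fun w : Fin p → ℝ => @ite _ (P i w) (D w i) (1:ℝ) 0)
      = Set.indicator {w : Fin p → ℝ | P i w} (fun _ => (1:ℝ)) := by
    funext w
    by_cases h : P i w <;> simp [h]
  rw [h2]
  exact measurable_const.indicator (hP i)

lemma ko_meas_inf' (S : Finset (Fin p)) (hS : S.Nonempty) (g : Fin p → (Fin p → ℝ) → ℝ)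
    (hg : ∀ j, Measurable (g j)) :
    Measurable (fun w : Fin p → ℝ => S.inf' hS (fun j => g j w)) := by
  induction hS using Finset.Nonempty.cons_induction with
  | singleton a => simpa using hg a
  | cons a s ha hs ih =>
    have : (fun w : Fin p → ℝ => (Finset.cons a s ha).inf' (by simp) (fun j => g j w))
        = fun w => (g a w) ⊓ s.inf' hs (fun j => g j w) := by
      funext w
      exact Finset.inf'_cons hs (fun j => g j w)
    rw [this]
    exact (hg a).inf ih

lemma koFDP_measurable (H0 : Finset (Fin p)) (q : ℝ) :
    Measurable (koFDP H0 q : (Fin p → ℝ) → ℝ) := by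
  classical
  set τf : (S : Finset (Fin p)) → S.Nonempty → (Fin p → ℝ) → ℝ :=
    fun S hS v => S.inf' hS (fun j' => |v j'|) with hτf
  have hτmeas : ∀ (S : Finset (Fin p)) (hS : S.Nonempty), Measurable (τf S hS) := by
    intro S hS
    exact ko_meas_inf' S hS (fun j v => |v j|) (fun j => (measurable_pi_apply j).abs)
  set fS : Finset (Fin p) → (Fin p → ℝ) → ℝ := fun S =>
    if hS : S.Nonempty then
      (fun v => (#(univ.filter (fun j => τf S hS v ≤ v j ∧ j ∈ H0)) : ℝ) /
        max (#(univ.filter (fun j => τf S hS v ≤ v j)) : ℝ) 1)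
    else fun _ => 0 with hfS
  have hfSmeas : ∀ S, Measurable (fS S) := by
    intro S
    by_cases hS : S.Nonempty
    · have hfs : fS S = fun v => (#(univ.filter (fun j => τf S hS v ≤ v j ∧ j ∈ H0)) : ℝ) /
          max (#(univ.filter (fun j => τf S hS v ≤ v j)) : ℝ) 1 := by
        simp only [hfS, dif_pos hS]
      rw [hfs]
      apply Measurable.div
      · refine ko_meas_count (fun j v => τf S hS v ≤ v j ∧ j ∈ H0) _ (fun j => ?_)
        by_cases hj : j ∈ H0
        · have : {w : Fin p → ℝ | τf S hS w ≤ w j ∧ j ∈ H0}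
              = {w : Fin p → ℝ | τf S hS w ≤ w j} := by
            ext w; simp [hj]
          rw [this]
          exact measurableSet_le (hτmeas S hS) (measurable_pi_apply j)
        · have : {w : Fin p → ℝ | τf S hS w ≤ w j ∧ j ∈ H0} = ∅ := by
            ext w; simp [hj]
          rw [this]
          exact MeasurableSet.empty
      · apply Measurable.max
        · exact ko_meas_count (fun j v => τf S hS v ≤ v j) _
            (fun j => measurableSet_le (hτmeas S hS) (measurable_pi_apply j))
        · exact measurable_const
    · have hfs : fS S = fun _ => 0 := by simp only [hfS, dif_neg hS]
      rw [hfs]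
      exact measurable_const
  have hCset : ∀ S : Finset (Fin p), MeasurableSet {v : Fin p → ℝ | koCandIdx q v = S} := by
    intro S
    have hPj : ∀ j : Fin p, MeasurableSet {v : Fin p → ℝ | v j ≠ 0 ∧
        (1 + (#(univ.filter (fun i : Fin p => v i ≤ -|v j|)) : ℝ)) /
          (max (#(univ.filter (fun i : Fin p => |v j| ≤ v i)) : ℝ) 1) ≤ q} := by
      intro j
      have hr : Measurable (fun v : Fin p → ℝ =>
          (1 + (#(univ.filter (fun i : Fin p => v i ≤ -|v j|)) : ℝ)) /
            (max (#(univ.filter (fun i : Fin p => |v j| ≤ v i)) : ℝ) 1)) := by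
        apply Measurable.div
        · apply Measurable.add measurable_const
          exact ko_meas_count (fun i v => v i ≤ -|v j|) _
            (fun i => measurableSet_le (measurable_pi_apply i)
              ((measurable_pi_apply j).abs.neg))
        · apply Measurable.max _ measurable_const
          exact ko_meas_count (fun i v => |v j| ≤ v i) _
            (fun i => measurableSet_le ((measurable_pi_apply j).abs) (measurable_pi_apply i))
      have hsplit2 : {v : Fin p → ℝ | v j ≠ 0 ∧
          (1 + (#(univ.filter (fun i : Fin p => v i ≤ -|v j|)) : ℝ)) /
            (max (#(univ.filter (fun i : Fin p => |v j| ≤ v i)) : ℝ) 1) ≤ q}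
          = ((fun v : Fin p → ℝ => v j) ⁻¹' {0})ᶜ ∩ {v : Fin p → ℝ |
            (1 + (#(univ.filter (fun i : Fin p => v i ≤ -|v j|)) : ℝ)) /
              (max (#(univ.filter (fun i : Fin p => |v j| ≤ v i)) : ℝ) 1) ≤ q} := rfl
      rw [hsplit2]
      exact MeasurableSet.inter ((measurable_pi_apply j) (MeasurableSet.singleton 0)).compl
        (measurableSet_le hr measurable_const)
    have hset_eq : {v : Fin p → ℝ | koCandIdx q v = S}
        = ⋂ j : Fin p, (if j ∈ S then {v : Fin p → ℝ | v j ≠ 0 ∧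
            (1 + (#(univ.filter (fun i : Fin p => v i ≤ -|v j|)) : ℝ)) /
              (max (#(univ.filter (fun i : Fin p => |v j| ≤ v i)) : ℝ) 1) ≤ q}
          else {v : Fin p → ℝ | v j ≠ 0 ∧
            (1 + (#(univ.filter (fun i : Fin p => v i ≤ -|v j|)) : ℝ)) /
              (max (#(univ.filter (fun i : Fin p => |v j| ≤ v i)) : ℝ) 1) ≤ q}ᶜ) := by
      ext v
      simp only [Set.mem_iInter, Set.mem_setOf_eq]
      constructor
      · intro hv j
        have hj : j ∈ koCandIdx q v ↔ j ∈ S := by rw [hv]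
        unfold koCandIdx at hj
        rw [Finset.mem_filter] at hj
        by_cases hjS : j ∈ S
        · rw [if_pos hjS]
          exact (hj.mpr hjS).2
        · rw [if_neg hjS]
          intro hc
          exact hjS (hj.mp ⟨mem_univ j, hc⟩)
      · intro hv
        ext j
        unfold koCandIdx
        rw [Finset.mem_filter]
        have := hv j
        by_cases hjS : j ∈ S
        · rw [if_pos hjS] at this
          simp only [hjS, iff_true]
          exact ⟨mem_univ j, this⟩
        · rw [if_neg hjS] at this
          simp only [hjS, iff_false]
          intro hc
          exact this hc.2
    rw [hset_eq]
    apply MeasurableSet.iInter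
    intro j
    by_cases hjS : j ∈ S
    · rw [if_pos hjS]; exact hPj j
    · rw [if_neg hjS]; exact (hPj j).compl
  have hpoint : ∀ v : Fin p → ℝ, koFDP H0 q v = fS (koCandIdx q v) v := by
    intro v
    by_cases h' : (koCandIdx q v).Nonempty
    · have h : (koCandidates q v).Nonempty := (koCand_nonempty_iff q v).mpr h'
      have hτ : (koCandidates q v).min' h = τf (koCandIdx q v) h' v :=
        koCand_min' q v h h'
      have hsel : koSelect q v = univ.filter (fun j => τf (koCandIdx q v) h' v ≤ v j) := by
        unfold koSelect
        rw [dif_pos h, hτ]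
      have hint : koSelect q v ∩ H0
          = univ.filter (fun j => τf (koCandIdx q v) h' v ≤ v j ∧ j ∈ H0) := by
        rw [hsel]
        ext j
        simp only [Finset.mem_inter, mem_filter, mem_univ, true_and]
      rw [hfS]
      simp only [dif_pos h']
      unfold koFDP
      rw [hint, hsel]
    · have h : ¬ (koCandidates q v).Nonempty := fun hc => h' ((koCand_nonempty_iff q v).mp hc)
      rw [hfS]
      simp only [dif_neg h']
      unfold koFDP koSelect
      rw [dif_neg h]
      simp
  have hsum : (koFDP H0 q : (Fin p → ℝ) → ℝ)
      = fun v => ∑ S ∈ (univ : Finset (Finset (Fin p))),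
          Set.indicator {v' : Fin p → ℝ | koCandIdx q v' = S} (fS S) v := by
    funext v
    rw [Finset.sum_eq_single (koCandIdx q v)]
    · rw [Set.indicator_of_mem (by exact rfl) (fS _)]
      exact hpoint v
    · intro S _ hSne
      apply Set.indicator_of_notMem
      exact fun hc => hSne hc.symm
    · intro hc
      exact absurd (Finset.mem_univ _) hc
  rw [hsum]
  apply Finset.measurable_sum
  intro S _
  exact (hfSmeas S).indicator (hCset S)

end Meas

lemma koFDP_nonneg' {p : ℕ} (H0 : Finset (Fin p)) (q : ℝ) (v : Fin p → ℝ) :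
    0 ≤ koFDP H0 q v := by
  unfold koFDP
  apply div_nonneg (Nat.cast_nonneg _)
  exact le_trans zero_le_one (le_max_right _ _)

lemma koFDP_le_one' {p : ℕ} (H0 : Finset (Fin p)) (q : ℝ) (v : Fin p → ℝ) :
    koFDP H0 q v ≤ 1 := by
  unfold koFDP
  rw [div_le_one (lt_of_lt_of_le one_pos (le_max_right _ _))]
  calc ((koSelect q v ∩ H0).card : ℝ) ≤ ((koSelect q v).card : ℝ) := by
        exact_mod_cast Finset.card_le_card Finset.inter_subset_left
    _ ≤ max ((koSelect q v).card : ℝ) 1 := le_max_left _ _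

/-- **Knockoff+ FDR control under null sign-flip symmetry (core of Lemma 1).** If flipping the
signs of the null coordinates of the score vector `W` arbitrarily leaves its joint distribution
unchanged, then the knockoff+ filter at level `q` controls the FDR at level `q`. -/
theorem knockoff_plus_fdr_control
    {Ω : Type*} [MeasurableSpace Ω]
    (μ : MeasureTheory.Measure Ω) [MeasureTheory.IsProbabilityMeasure μ]
    (p : ℕ) (hp : 1 ≤ p)
    (W : Ω → Fin p → ℝ) (hW : Measurable W)
    (H0 : Finset (Fin p))
    (q : ℝ) (hq0 : 0 < q) (hq1 : q ≤ 1)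
    -- sign-flip symmetry on the nulls
    (hsym : ∀ ε : Fin p → ℝ, (∀ j, ε j = 1 ∨ ε j = -1) → (∀ j ∉ H0, ε j = 1) →
      MeasureTheory.Measure.map (fun ω (j : Fin p) => ε j * W ω j) μ =
        MeasureTheory.Measure.map W μ) :
    ∫ ω, koFDP H0 q (W ω) ∂μ ≤ q := by
  classical
  have hfmeas : Measurable (koFDP H0 q : (Fin p → ℝ) → ℝ) := koFDP_measurable H0 q
  have hφmeas : ∀ A : Finset (Fin p),
      Measurable (fun ω (j : Fin p) => (if j ∈ A then (-1:ℝ) else 1) * W ω j) := by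
    intro A
    apply measurable_pi_lambda
    intro j
    exact ((measurable_pi_apply j).comp hW).const_mul _
  have hint : ∀ A : Finset (Fin p),
      MeasureTheory.Integrable
        (fun ω => koFDP H0 q (fun j => (if j ∈ A then (-1:ℝ) else 1) * W ω j)) μ := by
    intro A
    apply (MeasureTheory.integrable_const (1:ℝ)).mono'
      ((hfmeas.comp (hφmeas A)).aestronglyMeasurable)
    apply MeasureTheory.ae_of_all
    intro ω
    simp only [Function.comp_apply, Real.norm_eq_abs]
    rw [abs_of_nonneg (koFDP_nonneg' H0 q _)]
    exact koFDP_le_one' H0 q _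
  have hmap : ∀ A ∈ H0.powerset,
      ∫ ω, koFDP H0 q (fun j => (if j ∈ A then (-1:ℝ) else 1) * W ω j) ∂μ
      = ∫ ω, koFDP H0 q (W ω) ∂μ := by
    intro A hA
    rw [Finset.mem_powerset] at hA
    set ε : Fin p → ℝ := fun j => if j ∈ A then (-1:ℝ) else 1 with hε
    have hε1 : ∀ j, ε j = 1 ∨ ε j = -1 := by
      intro j
      by_cases hj : j ∈ A
      · right; simp only [hε, if_pos hj]
      · left; simp only [hε, if_neg hj]
    have hε2 : ∀ j ∉ H0, ε j = 1 := by
      intro j hj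
      simp only [hε, if_neg (fun hc => hj (hA hc))]
    have hmeq := hsym ε hε1 hε2
    calc ∫ ω, koFDP H0 q (fun j => ε j * W ω j) ∂μ
        = ∫ v, koFDP H0 q v ∂(MeasureTheory.Measure.map (fun ω (j : Fin p) => ε j * W ω j) μ) :=
          (MeasureTheory.integral_map (hφmeas A).aemeasurable
            hfmeas.aestronglyMeasurable).symm
      _ = ∫ v, koFDP H0 q v ∂(MeasureTheory.Measure.map W μ) := by rw [hmeq]
      _ = ∫ ω, koFDP H0 q (W ω) ∂μ :=
          MeasureTheory.integral_map hW.aemeasurable hfmeas.aestronglyMeasurable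
  have h2pos : (0:ℝ) < 2^(#H0) := by positivity
  have hkey : (2^(#H0) : ℝ) * ∫ ω, koFDP H0 q (W ω) ∂μ ≤ (2^(#H0) : ℝ) * q := by
    calc (2^(#H0) : ℝ) * ∫ ω, koFDP H0 q (W ω) ∂μ
        = ∑ A ∈ H0.powerset,
            ∫ ω, koFDP H0 q (fun j => (if j ∈ A then (-1:ℝ) else 1) * W ω j) ∂μ := by
          rw [Finset.sum_congr rfl hmap, Finset.sum_const, Finset.card_powerset, nsmul_eq_mul]
          push_cast
          ring
      _ = ∫ ω, ∑ A ∈ H0.powerset,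
            koFDP H0 q (fun j => (if j ∈ A then (-1:ℝ) else 1) * W ω j) ∂μ :=
          (MeasureTheory.integral_finset_sum _ (fun A _ => hint A)).symm
      _ ≤ ∫ _ω, (2^(#H0) : ℝ) * q ∂μ := by
          apply MeasureTheory.integral_mono
            (MeasureTheory.integrable_finset_sum _ (fun A _ => hint A))
            (MeasureTheory.integrable_const _)
          intro ω
          exact ko_det H0 q hq0 (W ω)
      _ = (2^(#H0) : ℝ) * q := by
          rw [MeasureTheory.integral_const]
          simp
  exact le_of_mul_le_mul_left hkey h2pos
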